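/- Let λ ∈ [1/(n+1), 1/2] and P ⊆ R^n a polytope. Then P = (1-λ)P + λV(P) if and only if P equals the closure of the infinite Minkowski sum ∑_{i=0}^∞ (1-λ)^i λ V(P), i.e., the closure of the set of all finite sums ∑_{i=0}^k (1-λ)^i λ v_i with v_i ∈ V(P) together with all limits of such sums. -/

import Mathlib

open Set Pointwise Metric

/-- A polytope is the convex hull of finitely many points. -/
def IsPolytope {n : ℕ} (P : Set (EuclideanSpace ℝ (Fin n))) : Prop :=
  ∃ S : Finset (EuclideanSpace ℝ (Fin n)), P = convexHull ℝ (S : Set (EuclideanSpace ℝ (Fin n)))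

/-- Any convergent sum `∑ (1-l)^i * l • v i` with all `v i` in a closed convex set `P`
lies in `P`. -/
lemma aux_sum_mem {n : ℕ} {l : ℝ} (hl0 : 0 < l) (hl1 : l < 1)
    {P : Set (EuclideanSpace ℝ (Fin n))} (hconv : Convex ℝ P) (hcl : IsClosed P)
    {v : ℕ → EuclideanSpace ℝ (Fin n)} (hv : ∀ i, v i ∈ P)
    {x : EuclideanSpace ℝ (Fin n)} (hx : HasSum (fun i => ((1 - l) ^ i * l) • v i) x) :
    x ∈ P := by
  have h1l0 : (0:ℝ) < 1 - l := by linarith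
  have h1l1 : (1:ℝ) - l < 1 := by linarith
  -- partial sums plus a correcting term lie in P
  have key : ∀ k : ℕ, ∀ p ∈ P,
      (∑ i ∈ Finset.range k, ((1 - l) ^ i * l) • v i) + (1 - l) ^ k • p ∈ P := by
    intro k
    induction k with
    | zero => intro p hp; simpa using hp
    | succ k ih =>
      intro p hp
      have hmem : l • v k + (1 - l) • p ∈ P :=
        hconv (hv k) hp hl0.le h1l0.le (by ring)
      have := ih _ hmem
      have heq : (∑ i ∈ Finset.range k, ((1 - l) ^ i * l) • v i) +
          (1 - l) ^ k • (l • v k + (1 - l) • p) =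
          (∑ i ∈ Finset.range (k + 1), ((1 - l) ^ i * l) • v i) + (1 - l) ^ (k + 1) • p := by
        rw [Finset.sum_range_succ]
        rw [pow_succ]
        rw [smul_add, smul_smul, smul_smul]
        ring_nf
        module
      rwa [heq] at this
  -- the sequence t_k tends to x
  have htend : Filter.Tendsto
      (fun k => (∑ i ∈ Finset.range k, ((1 - l) ^ i * l) • v i) + (1 - l) ^ k • v 0)
      Filter.atTop (nhds x) := by
    have h1 := hx.tendsto_sum_nat
    have h2 : Filter.Tendsto (fun k : ℕ => (1 - l) ^ k • v 0) Filter.atTop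
        (nhds ((0:ℝ) • v 0)) :=
      (tendsto_pow_atTop_nhds_zero_of_lt_one h1l0.le h1l1).smul_const (v 0)
    rw [zero_smul] at h2
    simpa using h1.add h2
  exact hcl.mem_of_tendsto htend (Filter.Eventually.of_forall fun k => key k _ (hv 0))

theorem stmt_16 {n : ℕ} (l : ℝ) (hl : l ∈ Set.Icc ((1 : ℝ) / ((n : ℝ) + 1)) (1 / 2))
    (P : Set (EuclideanSpace ℝ (Fin n))) (hP : IsPolytope P) :
    (P = (1 - l) • P + l • (P.extremePoints ℝ)) ↔
      P = closure {x : EuclideanSpace ℝ (Fin n) |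
        ∃ v : ℕ → EuclideanSpace ℝ (Fin n), (∀ i, v i ∈ P.extremePoints ℝ) ∧
          HasSum (fun i => ((1 - l) ^ i * l) • v i) x} := by
  classical
  obtain ⟨Sfin, hPS⟩ := hP
  set V : Set (EuclideanSpace ℝ (Fin n)) := P.extremePoints ℝ with hV
  set S : Set (EuclideanSpace ℝ (Fin n)) := {x : EuclideanSpace ℝ (Fin n) |
      ∃ v : ℕ → EuclideanSpace ℝ (Fin n), (∀ i, v i ∈ V) ∧
      HasSum (fun i => ((1 - l) ^ i * l) • v i) x} with hS
  have hl0 : (0:ℝ) < l := lt_of_lt_of_le (by positivity) hl.1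
  have hl1 : l < 1 := lt_of_le_of_lt hl.2 (by norm_num)
  have h1l0 : (0:ℝ) < 1 - l := by linarith
  have h1l1 : (1:ℝ) - l < 1 := by linarith
  have hconv : Convex ℝ P := by rw [hPS]; exact convex_convexHull ℝ _
  have hcomp : IsCompact P := by rw [hPS]; exact Sfin.finite_toSet.isCompact_convexHull ℝ
  have hcl : IsClosed P := hcomp.isClosed
  have hVP : V ⊆ P := extremePoints_subset
  have hVfin : V.Finite := Sfin.finite_toSet.subset (by rw [hV, hPS]; exact extremePoints_convexHull_subset)
  -- S ⊆ P
  have hSP : S ⊆ P := by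
    rintro x ⟨v, hv, hsum⟩
    exact aux_sum_mem hl0 hl1 hconv hcl (fun i => hVP (hv i)) hsum
  constructor
  · -- forward direction
    intro hfix
    apply Set.Subset.antisymm
    · -- P ⊆ closure S
      intro x hx
      obtain ⟨M, hM⟩ := isBounded_iff_forall_norm_le.1 hcomp.isBounded
      have hM0 : 0 ≤ M := le_trans (norm_nonneg x) (hM x hx)
      -- decomposition function
      have key : ∀ p : {y : EuclideanSpace ℝ (Fin n) // y ∈ P}, ∃ z : {y : EuclideanSpace ℝ (Fin n) // y ∈ P} × EuclideanSpace ℝ (Fin n),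
          z.2 ∈ V ∧ (p : EuclideanSpace ℝ (Fin n)) = (1 - l) • (z.1 : EuclideanSpace ℝ (Fin n)) + l • z.2 := by
        rintro ⟨p, hp⟩
        rw [hfix] at hp
        obtain ⟨a, ⟨q, hq, rfl⟩, b, ⟨w, hw, rfl⟩, rfl⟩ := hp
        exact ⟨⟨⟨q, hq⟩, w⟩, hw, rfl⟩
      set G : {y : EuclideanSpace ℝ (Fin n) // y ∈ P} → {y : EuclideanSpace ℝ (Fin n) // y ∈ P} := fun p => (key p).choose.1 with hG
      set pk : ℕ → {y : EuclideanSpace ℝ (Fin n) // y ∈ P} := fun k => G^[k] ⟨x, hx⟩ with hpk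
      set vf : ℕ → EuclideanSpace ℝ (Fin n) := fun k => (key (pk k)).choose.2 with hvf
      have hvfV : ∀ k, vf k ∈ V := fun k => (key (pk k)).choose_spec.1
      have hrec : ∀ k, (pk k : EuclideanSpace ℝ (Fin n)) = (1 - l) • (pk (k + 1) : EuclideanSpace ℝ (Fin n)) + l • vf k := by
        intro k
        have h1 : pk (k + 1) = G (pk k) := by
          simp only [hpk, Function.iterate_succ_apply']
        rw [h1]
        exact (key (pk k)).choose_spec.2
      have inv : ∀ k, x = (∑ i ∈ Finset.range k, ((1 - l) ^ i * l) • vf i)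
          + (1 - l) ^ k • (pk k : EuclideanSpace ℝ (Fin n)) := by
        intro k
        induction k with
        | zero => simp [hpk]
        | succ k ih =>
          rw [ih, hrec k, Finset.sum_range_succ, pow_succ]
          rw [smul_add, smul_smul, smul_smul]
          ring_nf
          try module
      rw [Metric.mem_closure_iff]
      intro ε hε
      -- choose k with (1-l)^k * (2M+1) < ε
      have hpow : Filter.Tendsto (fun k : ℕ => (1 - l) ^ k * (2 * M + 1)) Filter.atTop
          (nhds 0) := by
        simpa using (tendsto_pow_atTop_nhds_zero_of_lt_one h1l0.le h1l1).mul_const (2 * M + 1)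
      obtain ⟨k, hk⟩ := (hpow.eventually (gt_mem_nhds hε)).exists
      -- the approximating series
      set u : ℕ → EuclideanSpace ℝ (Fin n) := fun i => if i < k then vf i else vf 0 with hu
      have huV : ∀ i, u i ∈ V := by
        intro i; simp only [hu]; split <;> exact hvfV _
      set y : EuclideanSpace ℝ (Fin n) := (1 - l) ^ k • vf 0 + ∑ i ∈ Finset.range k, ((1 - l) ^ i * l) • u i with hy
      have hsum : HasSum (fun i => ((1 - l) ^ i * l) • u i) y := by
        rw [← hasSum_nat_add_iff k]
        have hgeo : HasSum (fun m : ℕ => (1 - l) ^ m • (((1 - l) ^ k * l) • vf 0))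
            ((1 - (1 - l))⁻¹ • (((1 - l) ^ k * l) • vf 0)) :=
          (hasSum_geometric_of_lt_one h1l0.le h1l1).smul_const _
        have heq1 : (1 - (1 - l))⁻¹ • (((1 - l) ^ k * l) • vf 0) = (1 - l) ^ k • vf 0 := by
          rw [smul_smul]
          congr 1
          field_simp
          rw [sub_sub_cancel, div_self hl0.ne']
        rw [heq1] at hgeo
        convert hgeo using 2 with m
        have hnk : ¬ (m + k < k) := by omega
        simp only [hu, hnk, if_false, smul_smul]
        congr 1
        rw [pow_add]
        ring
      refine ⟨y, ⟨u, huV, hsum⟩, ?_⟩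
      have hxy : x - y = (1 - l) ^ k • ((pk k : EuclideanSpace ℝ (Fin n)) - vf 0) := by
        rw [inv k, hy, smul_sub]
        have : ∀ i ∈ Finset.range k, ((1 - l) ^ i * l) • u i
            = ((1 - l) ^ i * l) • vf i := by
          intro i hi
          rw [Finset.mem_range] at hi
          simp [hu, hi]
        rw [Finset.sum_congr rfl this]
        module
      rw [dist_eq_norm, hxy, norm_smul]
      have hb : ‖(pk k : EuclideanSpace ℝ (Fin n)) - vf 0‖ ≤ 2 * M := by
        calc ‖(pk k : EuclideanSpace ℝ (Fin n)) - vf 0‖ ≤ ‖(pk k : EuclideanSpace ℝ (Fin n))‖ + ‖vf 0‖ := norm_sub_le _ _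
          _ ≤ M + M := add_le_add (hM _ (pk k).2) (hM _ (hVP (hvfV 0)))
          _ = 2 * M := by ring
      calc ‖(1 - l) ^ k‖ * ‖(pk k : EuclideanSpace ℝ (Fin n)) - vf 0‖ ≤ (1 - l) ^ k * (2 * M + 1) := by
            rw [Real.norm_eq_abs, abs_of_nonneg (by positivity)]
            have : (0:ℝ) ≤ (1 - l) ^ k := by positivity
            nlinarith
        _ < ε := hk
    · exact closure_minimal hSP hcl
  · -- backward direction
    intro hclo
    apply Set.Subset.antisymm
    · -- P ⊆ (1-l)•P + l•V
      have hVcomp : IsCompact V := hVfin.isCompact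
      have hclosed : IsClosed ((1 - l) • P + l • V) := by
        have h1 : IsCompact ((1 - l) • P) := by
          rw [← Set.image_smul]; exact hcomp.image (continuous_const_smul _)
        have h2 : IsCompact (l • V) := by
          rw [← Set.image_smul]; exact hVcomp.image (continuous_const_smul _)
        exact (h1.add h2).isClosed
      have hsub : S ⊆ (1 - l) • P + l • V := by
        rintro x ⟨v, hv, hsum⟩
        set f : ℕ → EuclideanSpace ℝ (Fin n) := fun i => ((1 - l) ^ i * l) • v i with hf
        have hpart : ∑ i ∈ Finset.range 1, f i = l • v 0 := by
          simp [hf]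
        have h1 : HasSum (fun m : ℕ => f (m + 1)) (x - l • v 0) := by
          rw [hasSum_nat_add_iff 1, hpart, sub_add_cancel]
          exact hsum
        have h2 : HasSum (fun m : ℕ => ((1 - l) ^ m * l) • v (m + 1))
            ((1 - l)⁻¹ • (x - l • v 0)) := by
          have := h1.const_smul ((1 - l)⁻¹)
          convert this using 2 with m
          simp only [hf, smul_smul, pow_succ]
          congr 1
          field_simp
        have hyP : (1 - l)⁻¹ • (x - l • v 0) ∈ P :=
          aux_sum_mem hl0 hl1 hconv hcl (fun i => hVP (hv (i + 1))) h2
        refine ⟨(1 - l) • ((1 - l)⁻¹ • (x - l • v 0)), ⟨_, hyP, rfl⟩,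
          l • v 0, ⟨v 0, hv 0, rfl⟩, ?_⟩
        rw [smul_inv_smul₀ (by linarith : (1:ℝ) - l ≠ 0)]
        module
      calc P = closure S := hclo
        _ ⊆ (1 - l) • P + l • V := closure_minimal hsub hclosed
    · -- (1-l)•P + l•V ⊆ P
      rintro x ⟨a, ⟨p, hp, rfl⟩, b, ⟨w, hw, rfl⟩, rfl⟩
      exact hconv hp (hVP hw) h1l0.le hl0.le (by ring)
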